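/- Let f : (0,∞) → ℝ be measurable. Suppose that for almost every a > 0 the limit F(a) = lim_{n→∞} f(a n) exists (as a real number). Then F is constant almost everywhere. -/

import Mathlib

open Filter Set MeasureTheory
open scoped symmDiff Topology

local notation "μ₀" => MeasureTheory.volume.restrict (Set.Ioi (0:ℝ))

lemma aux_ae_mu_iff {P : ℝ → Prop} :
    (∀ᵐ a ∂μ₀, P a) ↔ volume ({a : ℝ | ¬ P a} ∩ Set.Ioi 0) = 0 := by
  rw [ae_iff, Measure.restrict_apply' measurableSet_Ioi]

lemma aux_scale_null {c : ℝ} (hc : c ≠ 0) {N : Set ℝ} (hN : volume N = 0) :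
    volume ((fun a => c * a) ⁻¹' N) = 0 := by
  rw [Real.volume_preimage_mul_left hc, hN, mul_zero]

lemma aux_ae_scale {c : ℝ} (hc : 0 < c) {P : ℝ → Prop} (h : ∀ᵐ a ∂μ₀, P a) :
    ∀ᵐ a ∂μ₀, P (c * a) := by
  rw [aux_ae_mu_iff] at h ⊢
  refine measure_mono_null (fun a ha => ?_) (aux_scale_null hc.ne' h)
  exact ⟨ha.1, mul_pos hc ha.2⟩

lemma aux_image_exp_null {N : Set ℝ} (hN : volume N = 0) : volume (Real.exp '' N) = 0 :=
  MeasureTheory.addHaar_image_eq_zero_of_differentiableOn_of_addHaar_eq_zero volume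
    (Real.differentiable_exp.differentiableOn) hN

lemma aux_image_log_null {N : Set ℝ} (hsub : N ⊆ Set.Ioi 0) (hN : volume N = 0) :
    volume (Real.log '' N) = 0 :=
  MeasureTheory.addHaar_image_eq_zero_of_differentiableOn_of_addHaar_eq_zero volume
    (fun x hx => (Real.differentiableAt_log (ne_of_gt (hsub hx))).differentiableWithinAt) hN

lemma aux_ae_exp {P : ℝ → Prop} (h : ∀ᵐ a ∂μ₀, P a) :
    ∀ᵐ x ∂(volume : Measure ℝ), P (Real.exp x) := by
  rw [aux_ae_mu_iff] at h
  rw [ae_iff]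
  refine measure_mono_null (fun x hx => ?_)
    (aux_image_log_null (fun a ha => ha.2) h)
  exact ⟨Real.exp x, ⟨hx, Real.exp_pos x⟩, Real.log_exp x⟩

lemma aux_zero_one {t : Set ℝ} (ht : MeasurableSet t) {D : Set ℝ} (hD : Dense D)
    (hinv : ∀ d ∈ D, (fun x => d + x) ⁻¹' t =ᵐ[(volume : Measure ℝ)] t) :
    volume t = 0 ∨ volume tᶜ = 0 := by
  have key : ∀ x : ℝ, (fun y => x + y) ⁻¹' t =ᵐ[(volume : Measure ℝ)] t := by
    intro x
    rw [← measure_symmDiff_eq_zero_iff]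
    have hcover : ((fun y => x + y) ⁻¹' t) ∆ t ⊆
        ⋃ R : ℕ, (((fun y => x + y) ⁻¹' t) ∆ t) ∩ Set.Ioo (-(R:ℝ)) R := by
      intro y hy
      obtain ⟨R, hR⟩ := exists_nat_gt |y|
      exact Set.mem_iUnion.2 ⟨R, hy, (abs_lt.1 hR).1, (abs_lt.1 hR).2⟩
    refine measure_mono_null hcover (measure_iUnion_null fun R => ?_)
    set W := Set.Ioo (-(R:ℝ)) (R:ℝ) with hW
    set M : ℝ := R + |x| + 1 with hM
    set s := t ∩ Set.Ioo (-M) M with hs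
    have hsm : NullMeasurableSet s (volume : Measure ℝ) :=
      (ht.inter measurableSet_Ioo).nullMeasurableSet
    have hsfin : volume s ≠ ⊤ := by
      refine ne_top_of_le_ne_top ?_ (measure_mono Set.inter_subset_right)
      rw [Real.volume_Ioo]; exact ENNReal.ofReal_ne_top
    have hfam : Tendsto (fun d : ℝ =>
        volume (((fun y => d + y) ⁻¹' s) ∆ ((fun y => x + y) ⁻¹' s))) (𝓝 x) (𝓝 0) := by
      have h := MeasureTheory.tendsto_measure_symmDiff_preimage_nhds_zero
        (μ := (volume : Measure ℝ)) (ν := (volume : Measure ℝ))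
        (f := fun d : ℝ => (ContinuousMap.curry ⟨fun p : ℝ × ℝ => p.1 + p.2,
          continuous_fst.add continuous_snd⟩) d)
        (g := (ContinuousMap.curry ⟨fun p : ℝ × ℝ => p.1 + p.2,
          continuous_fst.add continuous_snd⟩) x)
        (l := 𝓝 x)
        (((ContinuousMap.curry _).continuous).tendsto x)
        (.of_forall fun d => MeasureTheory.measurePreserving_add_left volume d)
        (MeasureTheory.measurePreserving_add_left volume x) hsm hsfin
      exact h
    refine le_antisymm ?_ zero_le
    refine ENNReal.le_of_forall_pos_le_add fun ε hε _ => ?_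
    rw [zero_add]
    have hev : ∀ᶠ d in 𝓝 x,
        volume (((fun y => d + y) ⁻¹' s) ∆ ((fun y => x + y) ⁻¹' s)) < ε ∧ dist d x < 1 := by
      filter_upwards [hfam.eventually (gt_mem_nhds (ENNReal.coe_pos.2 hε)),
        Metric.ball_mem_nhds x one_pos] with d h1 h2
      exact ⟨h1, h2⟩
    rw [Metric.eventually_nhds_iff] at hev
    obtain ⟨δ, hδ, hball⟩ := hev
    obtain ⟨d, hdD, hdist⟩ := hD.exists_dist_lt x hδ
    have hd := hball (y := d) (by rwa [dist_comm])
    obtain ⟨hdε, hd1⟩ := hd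
    have hwin : ∀ c : ℝ, |c - x| < 1 → ∀ y ∈ W, (c + y ∈ t ↔ c + y ∈ s) := by
      intro c hc y hyW
      simp only [hs, Set.mem_inter_iff, Set.mem_Ioo, iff_self_and]
      intro _
      have h1 : |y| < R := abs_lt.2 ⟨hyW.1, hyW.2⟩
      have h2 : |c + y| < M := by
        have hb : |c + y| ≤ |c - x| + (|x| + |y|) := by
          calc |c + y| = |(c - x) + (x + y)| := by ring_nf
            _ ≤ |c - x| + |x + y| := abs_add_le _ _
            _ ≤ |c - x| + (|x| + |y|) := by
                exact add_le_add le_rfl (abs_add_le _ _)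
        rw [hM]; linarith
      exact ⟨(abs_lt.1 h2).1, (abs_lt.1 h2).2⟩
    have hx0 : |x - x| < 1 := by simpa using one_pos
    have hdx : |d - x| < 1 := by rwa [Real.dist_eq] at hd1
    have step1 : ((((fun y => x + y) ⁻¹' t) ∆ t) ∩ W) ⊆
        ((((fun y => x + y) ⁻¹' t) ∆ ((fun y => d + y) ⁻¹' t)) ∩ W) ∪
        ((((fun y => d + y) ⁻¹' t) ∆ t) ∩ W) := by
      intro y hy
      have := symmDiff_triangle ((fun y => x + y) ⁻¹' t) ((fun y => d + y) ⁻¹' t) t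
      rcases this hy.1 with h | h
      · exact Or.inl ⟨h, hy.2⟩
      · exact Or.inr ⟨h, hy.2⟩
    have step2 : volume ((((fun y => d + y) ⁻¹' t) ∆ t) ∩ W) = 0 :=
      measure_mono_null Set.inter_subset_left
        (measure_symmDiff_eq_zero_iff.2 (hinv d hdD))
    have step3 : ((((fun y => x + y) ⁻¹' t) ∆ ((fun y => d + y) ⁻¹' t)) ∩ W) ⊆
        (((fun y => x + y) ⁻¹' s) ∆ ((fun y => d + y) ⁻¹' s)) := by
      intro y hy
      have hyW := hy.2
      have e1 := hwin x hx0 y hyW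
      have e2 := hwin d hdx y hyW
      rcases hy.1 with ⟨h1, h2⟩ | ⟨h1, h2⟩
      · exact Or.inl ⟨e1.1 h1, fun hc => h2 (e2.2 hc)⟩
      · exact Or.inr ⟨e2.1 h1, fun hc => h2 (e1.2 hc)⟩
    calc volume ((((fun y => x + y) ⁻¹' t) ∆ t) ∩ W)
        ≤ volume (((((fun y => x + y) ⁻¹' t) ∆ ((fun y => d + y) ⁻¹' t)) ∩ W)) +
          volume (((((fun y => d + y) ⁻¹' t) ∆ t) ∩ W)) :=
          (measure_mono step1).trans (measure_union_le _ _)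
      _ ≤ volume ((((fun y => x + y) ⁻¹' s) ∆ ((fun y => d + y) ⁻¹' s))) + 0 :=
          add_le_add (measure_mono step3) (le_of_eq step2)
      _ ≤ ε := by
          rw [add_zero, symmDiff_comm]
          exact hdε.le
  have hconst : Filter.EventuallyConst t (MeasureTheory.ae (volume : Measure ℝ)) :=
    MeasureTheory.aeconst_of_forall_preimage_vadd_ae_eq (G := ℝ) ht.nullMeasurableSet key
  rw [Filter.eventuallyConst_set] at hconst
  rcases hconst with h | h
  · right
    have h' : volume {a | a ∉ t} = 0 := by simpa [ae_iff] using h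
    exact h'
  · left
    simpa [ae_iff] using h

set_option maxHeartbeats 1000000 in
theorem stmt_5 (f F : ℝ → ℝ) (hmeas : Measurable f)
    (hF : ∀ᵐ a ∂(volume.restrict (Set.Ioi (0:ℝ))),
      Tendsto (fun n : ℕ => f (a * n)) atTop (nhds (F a))) :
    ∃ C : ℝ, ∀ᵐ a ∂(volume.restrict (Set.Ioi (0:ℝ))), F a = C := by
  have hFae : AEMeasurable F μ₀ :=
    aemeasurable_of_tendsto_metrizable_ae (f := fun (n : ℕ) (a : ℝ) => f (a * n))
      (μ := μ₀) atTop
      (fun n => (hmeas.comp (measurable_mul_const (n:ℝ))).aemeasurable) hF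
  set G : ℝ → ℝ := hFae.mk F with hGdef
  have hG : Measurable G := hFae.measurable_mk
  have hFG : F =ᵐ[μ₀] G := hFae.ae_eq_mk
  have claim1 : ∀ k : ℕ, 0 < k → ∀ᵐ a ∂μ₀, F ((k:ℝ) * a) = F a := by
    intro k hk
    have hkR : (0:ℝ) < (k:ℝ) := by exact_mod_cast hk
    have h2 : ∀ᵐ a ∂μ₀,
        Tendsto (fun n : ℕ => f (((k:ℝ) * a) * n)) atTop (nhds (F ((k:ℝ) * a))) :=
      aux_ae_scale hkR hF
    filter_upwards [hF, h2] with a ha hka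
    have hmul : Tendsto (fun n : ℕ => k * n) atTop atTop :=
      tendsto_atTop_atTop.2 fun b => ⟨b, fun n hn => hn.trans (Nat.le_mul_of_pos_left n hk)⟩
    have h3 : Tendsto (fun n : ℕ => f (a * ((k * n : ℕ):ℝ))) atTop (nhds (F a)) :=
      ha.comp hmul
    have heq : (fun n : ℕ => f (a * ((k * n : ℕ):ℝ))) =
        fun n : ℕ => f (((k:ℝ) * a) * (n:ℝ)) := by
      funext n; push_cast; ring_nf
    rw [heq] at h3
    exact tendsto_nhds_unique hka h3
  have claim3 : ∀ k l : ℕ, 0 < k → 0 < l →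
      ∀ᵐ a ∂μ₀, F (((k:ℝ)/(l:ℝ)) * a) = F a := by
    intro k l hk hl
    have hlR : (0:ℝ) < (l:ℝ) := by exact_mod_cast hl
    have hinv : (0:ℝ) < ((l:ℝ))⁻¹ := inv_pos.2 hlR
    have h1 : ∀ᵐ a ∂μ₀, F ((k:ℝ) * (((l:ℝ))⁻¹ * a)) = F (((l:ℝ))⁻¹ * a) :=
      aux_ae_scale hinv (claim1 k hk)
    have h2 : ∀ᵐ a ∂μ₀, F ((l:ℝ) * (((l:ℝ))⁻¹ * a)) = F (((l:ℝ))⁻¹ * a) :=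
      aux_ae_scale hinv (claim1 l hl)
    filter_upwards [h1, h2] with a ha1 ha2
    have e1 : (l:ℝ) * (((l:ℝ))⁻¹ * a) = a := by field_simp
    have e2 : (k:ℝ) * (((l:ℝ))⁻¹ * a) = ((k:ℝ)/(l:ℝ)) * a := by ring
    rw [e1] at ha2
    rw [e2] at ha1
    rw [ha1, ha2]
  have claimG : ∀ k l : ℕ, 0 < k → 0 < l →
      ∀ᵐ a ∂μ₀, G (((k:ℝ)/(l:ℝ)) * a) = G a := by
    intro k l hk hl
    have hq : (0:ℝ) < (k:ℝ)/(l:ℝ) := by positivity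
    have h1 : ∀ᵐ a ∂μ₀, F (((k:ℝ)/(l:ℝ)) * a) = G (((k:ℝ)/(l:ℝ)) * a) :=
      aux_ae_scale (P := fun x => F x = G x) hq hFG
    filter_upwards [claim3 k l hk hl, h1, hFG] with a h h1 h2
    rw [← h1, h, h2]
  set D : Set ℝ := {d : ℝ | ∃ k l : ℕ, 0 < k ∧ 0 < l ∧ d = Real.log ((k:ℝ)/(l:ℝ))}
    with hDdef
  have hD : Dense D := by
    rw [dense_iff_exists_between]
    intro a b hab
    obtain ⟨q, hq1, hq2⟩ := exists_rat_btwn (Real.exp_lt_exp.2 hab)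
    have hq0 : (0:ℝ) < (q:ℝ) := (Real.exp_pos a).trans hq1
    have hq0' : 0 < q := by exact_mod_cast hq0
    have hnum : 0 < q.num := Rat.num_pos.2 hq0'
    have hqeq : ((q.num.toNat : ℕ) : ℝ) / ((q.den : ℕ) : ℝ) = (q:ℝ) := by
      rw [Rat.cast_def]
      congr 1
      exact_mod_cast congrArg (fun z : ℤ => (z : ℝ)) (Int.toNat_of_nonneg hnum.le)
    refine ⟨Real.log (((q.num.toNat : ℕ) : ℝ) / ((q.den : ℕ) : ℝ)),
      ⟨q.num.toNat, q.den, by omega, q.den_pos, rfl⟩, ?_, ?_⟩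
    · rw [hqeq]
      exact (Real.lt_log_iff_exp_lt hq0).2 hq1
    · rw [hqeq]
      exact (Real.log_lt_iff_lt_exp hq0).2 hq2
  have hdich : ∀ r : ℚ, (∀ᵐ a ∂μ₀, ¬ (G a ≤ (r:ℝ))) ∨ (∀ᵐ a ∂μ₀, G a ≤ (r:ℝ)) := by
    intro r
    set t : Set ℝ := {x : ℝ | G (Real.exp x) ≤ (r:ℝ)} with htdef
    have ht : MeasurableSet t := measurableSet_le (hG.comp Real.measurable_exp) measurable_const
    have hinv : ∀ d ∈ D, (fun x => d + x) ⁻¹' t =ᵐ[(volume : Measure ℝ)] t := by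
      intro d hd
      obtain ⟨k, l, hk, hl, rfl⟩ := hd
      have hq : (0:ℝ) < (k:ℝ)/(l:ℝ) := by
        have hkR : (0:ℝ) < (k:ℝ) := by exact_mod_cast hk
        have hlR : (0:ℝ) < (l:ℝ) := by exact_mod_cast hl
        positivity
      have h := aux_ae_exp (claimG k l hk hl)
      rw [eventuallyEq_set]
      filter_upwards [h] with x hx
      simp only [mem_preimage, htdef, mem_setOf_eq]
      rw [Real.exp_add, Real.exp_log hq, hx]
    rcases aux_zero_one ht hD hinv with h | h
    · left
      rw [aux_ae_mu_iff]
      refine measure_mono_null ?_ (aux_image_exp_null h)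
      rintro a ⟨ha1, ha2⟩
      rw [Set.mem_setOf_eq, not_not] at ha1
      refine ⟨Real.log a, ?_, Real.exp_log ha2⟩
      show G (Real.exp (Real.log a)) ≤ (r:ℝ)
      rwa [Real.exp_log ha2]
    · right
      rw [aux_ae_mu_iff]
      refine measure_mono_null ?_ (aux_image_exp_null h)
      rintro a ⟨ha1, ha2⟩
      rw [Set.mem_setOf_eq] at ha1
      refine ⟨Real.log a, ?_, Real.exp_log ha2⟩
      show ¬ (G (Real.exp (Real.log a)) ≤ (r:ℝ))
      rwa [Real.exp_log ha2]
  have hnotall : ¬ (∀ᵐ a ∂μ₀, False) := by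
    rw [aux_ae_mu_iff]
    simp [Real.volume_Ioi]
  set S : Set ℚ := {r : ℚ | ∀ᵐ a ∂μ₀, G a ≤ (r:ℝ)} with hSdef
  have hSne : S.Nonempty := by
    by_contra hS
    rw [Set.not_nonempty_iff_eq_empty] at hS
    have hall : ∀ r : ℚ, ∀ᵐ a ∂μ₀, ¬ (G a ≤ (r:ℝ)) := by
      intro r
      rcases hdich r with h | h
      · exact h
      · exact absurd (show r ∈ S from h) (by rw [hS]; exact Set.notMem_empty r)
    refine hnotall ?_
    filter_upwards [(ae_all_iff).2 hall] with a ha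
    obtain ⟨r, hr⟩ := exists_rat_gt (G a)
    exact ha r hr.le
  have hSbdd : ∃ m : ℚ, ∀ r ∈ S, m ≤ r := by
    by_contra hm
    push_neg at hm
    choose g hg1 hg2 using fun n : ℕ => hm (-(n:ℚ))
    have hall : ∀ᵐ a ∂μ₀, ∀ n : ℕ, G a ≤ ((g n : ℚ):ℝ) :=
      (ae_all_iff).2 fun n => hg1 n
    refine hnotall ?_
    filter_upwards [hall] with a ha
    obtain ⟨n, hn⟩ := exists_nat_gt (-(G a))
    have h1 : ((g n : ℚ):ℝ) < ((-(n:ℚ) : ℚ):ℝ) := by exact_mod_cast hg2 n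
    have h2 : ((-(n:ℚ) : ℚ):ℝ) = -(n:ℝ) := by push_cast; ring
    have := lt_of_le_of_lt (ha n) (by rw [h2] at h1; exact h1)
    linarith
  obtain ⟨m, hm⟩ := hSbdd
  set Sr : Set ℝ := (fun r : ℚ => (r:ℝ)) '' S with hSr
  have hSrne : Sr.Nonempty := hSne.image _
  have hSrbdd : BddBelow Sr := ⟨(m:ℝ), by rintro _ ⟨r, hr, rfl⟩; show (m:ℝ) ≤ (r:ℝ); exact_mod_cast hm r hr⟩
  set C : ℝ := sInf Sr with hC
  refine ⟨C, ?_⟩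
  have hle : ∀ᵐ a ∂μ₀, G a ≤ C := by
    have hstep : ∀ n : ℕ, ∀ᵐ a ∂μ₀, G a < C + 1/((n:ℝ)+1) := by
      intro n
      obtain ⟨x, hxS, hx⟩ := Real.lt_sInf_add_pos hSrne
        (by positivity : (0:ℝ) < 1/((n:ℝ)+1))
      obtain ⟨r, hrS, rfl⟩ := hxS
      filter_upwards [(show ∀ᵐ a ∂μ₀, G a ≤ (r:ℝ) from hrS)] with a ha
      exact lt_of_le_of_lt ha hx
    filter_upwards [(ae_all_iff).2 hstep] with a ha
    by_contra hlt
    push_neg at hlt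
    obtain ⟨n, hn⟩ := exists_nat_one_div_lt (sub_pos.2 hlt)
    have := ha n
    linarith
  have hge : ∀ᵐ a ∂μ₀, C ≤ G a := by
    have hstep : ∀ r : ℚ, ∀ᵐ a ∂μ₀, ((r:ℝ) < C → ¬ (G a ≤ (r:ℝ))) := by
      intro r
      by_cases hr : (r:ℝ) < C
      · have hrS : r ∉ S := by
          intro hrS
          have : C ≤ (r:ℝ) := csInf_le hSrbdd ⟨r, hrS, rfl⟩
          linarith
        rcases hdich r with h | h
        · filter_upwards [h] with a ha _
          exact ha
        · exact absurd h hrS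
      · filter_upwards with a hc
        exact absurd hc hr
    filter_upwards [(ae_all_iff).2 hstep] with a ha
    by_contra hlt
    push_neg at hlt
    obtain ⟨r, hr1, hr2⟩ := exists_rat_btwn hlt
    exact ha r hr2 hr1.le
  filter_upwards [hle, hge, hFG] with a h1 h2 h3
  rw [h3]
  exact le_antisymm h1 h2
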